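/- Let S be a saturated Hopf C*-algebra. The following are equivalent: (i) the convolution algebra S* is unital; (ii) S* has a bounded left approximate identity; (iii) S* has a bounded left σ(S*,S)-approximate identity. -/

import Mathlib

open Filter Topology

/-- A (saturated) Hopf C*-algebra structure on a C*-algebra `S`, encoded through the
slice maps of the comultiplication `δ : S → M(S ⊗ S)`:
`sliceR f = (id ⊗ f) ∘ δ` and `sliceL f = (f ⊗ id) ∘ δ`.  The convolution product on
the dual `S*` is `f ★ g = (f ⊗ g) ∘ δ = f ∘ sliceR g = g ∘ sliceL f`.  Saturation is
encoded via its functional form: for every nonzero `S`-invariant subspace `N` of `S*`,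
the span of the slices `(id ⊗ g) δ(r)` (resp. `(g ⊗ id) δ(r)`), `g ∈ N`, `r ∈ S`, is
dense in `S`. -/
structure HopfCStarStructure (S : Type) [NonUnitalNormedRing S] [StarRing S] [CStarRing S]
    [NormedSpace ℂ S] [IsScalarTower ℂ S S] [SMulCommClass ℂ S S] [StarModule ℂ S]
    [CompleteSpace S] where
  sliceR : (S →L[ℂ] ℂ) →ₗ[ℂ] (S →L[ℂ] S)
  sliceL : (S →L[ℂ] ℂ) →ₗ[ℂ] (S →L[ℂ] S)
  norm_sliceR : ∀ (f : S →L[ℂ] ℂ) (r : S), ‖sliceR f r‖ ≤ ‖f‖ * ‖r‖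
  norm_sliceL : ∀ (f : S →L[ℂ] ℂ) (r : S), ‖sliceL f r‖ ≤ ‖f‖ * ‖r‖
  conv_eq : ∀ (f g : S →L[ℂ] ℂ) (r : S), f (sliceR g r) = g (sliceL f r)
  sliceR_conv : ∀ f g : S →L[ℂ] ℂ,
    (sliceR f).comp (sliceR g) = sliceR (f.comp (sliceR g))
  sliceL_conv : ∀ f g : S →L[ℂ] ℂ,
    (sliceL g).comp (sliceL f) = sliceL (f.comp (sliceR g))
  slice_comm : ∀ f g : S →L[ℂ] ℂ,
    (sliceL f).comp (sliceR g) = (sliceR g).comp (sliceL f)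
  saturatedR : ∀ N : Submodule ℂ (S →L[ℂ] ℂ), N ≠ ⊥ →
    (∀ f ∈ N, ∀ s : S, f.comp (ContinuousLinearMap.mul ℂ S s) ∈ N ∧
        f.comp ((ContinuousLinearMap.mul ℂ S).flip s) ∈ N) →
    Dense (↑(Submodule.span ℂ {x : S | ∃ f ∈ N, ∃ r : S, x = sliceR f r}) : Set S)
  saturatedL : ∀ N : Submodule ℂ (S →L[ℂ] ℂ), N ≠ ⊥ →
    (∀ f ∈ N, ∀ s : S, f.comp (ContinuousLinearMap.mul ℂ S s) ∈ N ∧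
        f.comp ((ContinuousLinearMap.mul ℂ S).flip s) ∈ N) →
    Dense (↑(Submodule.span ℂ {x : S | ∃ f ∈ N, ∃ r : S, x = sliceL f r}) : Set S)

/-- The convolution product `f ★ g = (f ⊗ g) ∘ δ` on the dual of a Hopf C*-algebra. -/
noncomputable def HopfCStarStructure.conv {S : Type} [NonUnitalNormedRing S] [StarRing S] [CStarRing S]
    [NormedSpace ℂ S] [IsScalarTower ℂ S S] [SMulCommClass ℂ S S] [StarModule ℂ S]
    [CompleteSpace S] (h : HopfCStarStructure S) (f g : S →L[ℂ] ℂ) : S →L[ℂ] ℂ :=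
  f.comp (h.sliceR g)

/-- For a saturated Hopf C*-algebra `S`, the following are equivalent:
(i) the convolution algebra `S*` is unital; (ii) `S*` has a bounded left approximate
identity (in norm); (iii) `S*` has a bounded left `σ(S*,S)`-approximate identity. -/
theorem dual_unital_iff_bounded_left_approx_id
    (S : Type) [NonUnitalNormedRing S] [StarRing S] [CStarRing S]
    [NormedSpace ℂ S] [IsScalarTower ℂ S S] [SMulCommClass ℂ S S] [StarModule ℂ S]
    [CompleteSpace S] (h : HopfCStarStructure S) :
    ((∃ e : S →L[ℂ] ℂ, ∀ g : S →L[ℂ] ℂ, h.conv e g = g ∧ h.conv g e = g) ↔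
      (∃ (ι : Type) (l : Filter ι) (f : ι → (S →L[ℂ] ℂ)), l.NeBot ∧
        (∃ C : ℝ, ∀ i, ‖f i‖ ≤ C) ∧
        ∀ g : S →L[ℂ] ℂ, Tendsto (fun i => ‖h.conv (f i) g - g‖) l (𝓝 0))) ∧
    ((∃ e : S →L[ℂ] ℂ, ∀ g : S →L[ℂ] ℂ, h.conv e g = g ∧ h.conv g e = g) ↔
      (∃ (ι : Type) (l : Filter ι) (f : ι → (S →L[ℂ] ℂ)), l.NeBot ∧
        (∃ C : ℝ, ∀ i, ‖f i‖ ≤ C) ∧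
        ∀ (g : S →L[ℂ] ℂ) (s : S), Tendsto (fun i => h.conv (f i) g s) l (𝓝 (g s)))) := by
    classical
  -- Key step: a bounded weak* approximate left identity yields a two-sided identity.
  have key : (∃ (ι : Type) (l : Filter ι) (f : ι → (S →L[ℂ] ℂ)), l.NeBot ∧
        (∃ C : ℝ, ∀ i, ‖f i‖ ≤ C) ∧
        ∀ (g : S →L[ℂ] ℂ) (s : S), Tendsto (fun i => h.conv (f i) g s) l (𝓝 (g s))) →
      (∃ e : S →L[ℂ] ℂ, ∀ g : S →L[ℂ] ℂ, h.conv e g = g ∧ h.conv g e = g) := by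
    rintro ⟨ι, l, f, hl, ⟨C, hC⟩, htend⟩
    -- Banach–Alaoglu : find a weak* cluster point of the net.
    set K : Set (WeakDual ℂ S) :=
      WeakDual.toStrongDual ⁻¹' Metric.closedBall 0 (max C 0) with hK
    have hKc : IsCompact K := WeakDual.isCompact_closedBall (0 : StrongDual ℂ S) (max C 0)
    set F : Filter (WeakDual ℂ S) :=
      l.map (fun i => StrongDual.toWeakDual (f i)) with hF
    haveI : F.NeBot := Filter.map_neBot
    have hFK : F ≤ 𝓟 K := by
      rw [Filter.le_principal_iff, hF, Filter.mem_map]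
      filter_upwards with i
      simp only [hK, Set.mem_preimage, Metric.mem_closedBall]
      have : WeakDual.toStrongDual (StrongDual.toWeakDual (f i)) = f i := rfl
      rw [this, dist_zero_right]
      exact le_trans (hC i) (le_max_left _ _)
    obtain ⟨e', -, he'⟩ := hKc.exists_clusterPt hFK
    set e : S →L[ℂ] ℂ := WeakDual.toStrongDual e' with he
    -- evaluate the cluster point against `sliceR g s` to see that `e` is a left identity
    have keyval : ∀ (g : S →L[ℂ] ℂ) (s : S), e (h.sliceR g s) = g s := by
      intro g s
      have h1 : ClusterPt (e' (h.sliceR g s)) (F.map (fun φ : WeakDual ℂ S => φ (h.sliceR g s))) :=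
        he'.map (WeakDual.eval_continuous (h.sliceR g s)).continuousAt Filter.tendsto_map
      have h2 : (F.map (fun φ : WeakDual ℂ S => φ (h.sliceR g s))) ≤ 𝓝 (g s) := by
        rw [hF, Filter.map_map]
        exact htend g s
      exact eq_of_nhds_neBot (h1.mono h2)
    have hleft : ∀ g : S →L[ℂ] ℂ, h.conv e g = g := by
      intro g; ext s; exact keyval g s
    refine ⟨e, fun g => ⟨hleft g, ?_⟩⟩
    by_cases hall : ∀ g' : S →L[ℂ] ℂ, g' = 0
    · rw [hall g]
      ext s
      simp [HopfCStarStructure.conv]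
    · -- saturation: `sliceR e = id`, hence `e` is also a right identity
      push_neg at hall
      obtain ⟨g₀, hg₀⟩ := hall
      have hne : (⊤ : Submodule ℂ (S →L[ℂ] ℂ)) ≠ ⊥ := by
        intro hb
        apply hg₀
        have : g₀ ∈ (⊥ : Submodule ℂ (S →L[ℂ] ℂ)) := hb ▸ Submodule.mem_top
        simpa using this
      have hdense := h.saturatedR ⊤ hne (fun f' _ s => ⟨Submodule.mem_top, Submodule.mem_top⟩)
      set T : S →L[ℂ] S := h.sliceR e - ContinuousLinearMap.id ℂ S with hT
      have hgen : {x : S | ∃ f' ∈ (⊤ : Submodule ℂ (S →L[ℂ] ℂ)), ∃ r : S, x = h.sliceR f' r}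
          ⊆ (LinearMap.ker (T : S →ₗ[ℂ] S) : Set S) := by
        rintro x ⟨f', -, r, rfl⟩
        have hcomp := congrFun (congrArg (DFunLike.coe) (h.sliceR_conv e f')) r
        simp only [ContinuousLinearMap.coe_comp', Function.comp_apply] at hcomp
        have : h.sliceR e (h.sliceR f' r) = h.sliceR f' r := by
          rw [hcomp]
          change h.sliceR (h.conv e f') r = _
          rw [hleft f']
        simp only [SetLike.mem_coe, LinearMap.mem_ker, hT, ContinuousLinearMap.coe_coe,
          ContinuousLinearMap.coe_sub', Pi.sub_apply, ContinuousLinearMap.coe_id', id_eq,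
          ContinuousLinearMap.sub_apply, ContinuousLinearMap.id_apply]
        rw [this]
        exact sub_self _
      have hspan : (↑(Submodule.span ℂ
            {x : S | ∃ f' ∈ (⊤ : Submodule ℂ (S →L[ℂ] ℂ)), ∃ r : S, x = h.sliceR f' r}) : Set S)
          ⊆ (LinearMap.ker (T : S →ₗ[ℂ] S) : Set S) := by
        have := Submodule.span_le.mpr hgen
        exact fun x hx => this hx
      have hker : ∀ x : S, T x = 0 := by
        intro x
        have hx : x ∈ closure (↑(Submodule.span ℂ
            {x : S | ∃ f' ∈ (⊤ : Submodule ℂ (S →L[ℂ] ℂ)), ∃ r : S, x = h.sliceR f' r}) : Set S) := by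
          rw [hdense.closure_eq]; trivial
        have hcl : closure (↑(Submodule.span ℂ
            {x : S | ∃ f' ∈ (⊤ : Submodule ℂ (S →L[ℂ] ℂ)), ∃ r : S, x = h.sliceR f' r}) : Set S)
            ⊆ (LinearMap.ker (T : S →ₗ[ℂ] S) : Set S) :=
          closure_minimal hspan (ContinuousLinearMap.isClosed_ker T)
        exact hcl hx
      have hsl : ∀ s : S, h.sliceR e s = s := by
        intro s
        have := hker s
        simp only [hT, ContinuousLinearMap.sub_apply, ContinuousLinearMap.id_apply,
          sub_eq_zero] at this
        exact this
      ext s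
      change g (h.sliceR e s) = g s
      rw [hsl s]
  constructor
  · constructor
    · rintro ⟨e, he⟩
      refine ⟨Unit, pure (), fun _ => e, Filter.pure_neBot, ⟨‖e‖, fun _ => le_rfl⟩, fun g => ?_⟩
      simp only [(he g).1, sub_self, norm_zero]
      exact tendsto_const_nhds
    · rintro ⟨ι, l, f, hl, hC, htend⟩
      apply key
      refine ⟨ι, l, f, hl, hC, fun g s => ?_⟩
      rw [tendsto_iff_norm_sub_tendsto_zero]
      have hb : ∀ i, ‖h.conv (f i) g s - g s‖ ≤ ‖h.conv (f i) g - g‖ * ‖s‖ := by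
        intro i
        have : h.conv (f i) g s - g s = (h.conv (f i) g - g) s := by
          simp [ContinuousLinearMap.sub_apply]
        rw [this]
        exact (h.conv (f i) g - g).le_opNorm s
      have hlim : Tendsto (fun i => ‖h.conv (f i) g - g‖ * ‖s‖) l (𝓝 0) := by
        have := (htend g).mul_const ‖s‖
        simpa using this
      exact squeeze_zero (fun i => norm_nonneg _) hb hlim
  · constructor
    · rintro ⟨e, he⟩
      refine ⟨Unit, pure (), fun _ => e, Filter.pure_neBot, ⟨‖e‖, fun _ => le_rfl⟩, fun g s => ?_⟩
      simp only [(he g).1]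
      exact tendsto_const_nhds
    · exact key
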